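/- arXiv:1311.4425 — 4 statements merged into one kernel-verified Lean document; each statement's English description precedes it below -/
import Mathlib

section
/- (Refinement of d-equivalences.) Let G be a topology with marked k-tuple ḡ. For all natural numbers j ≤ d and all vertices u, v ∈ V: if μ_d(u) = μ_d(v) then μ_j(u) = μ_j(v). In particular, for every d the relation ∼_d refines ∼_0, so the labeling Λ is constant on each ∼_d-equivalence class. -/
/-! Markings of topologies with a marked k-tuple, following the paper's
`d`-contraction construction. -/

noncomputable def dst {α : Type} (l : List α) : List α :=
  @List.destutter α (· ≠ ·) (fun _ _ => Classical.dec _) l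

/-- A topology: a finite nonempty directed graph with no self-loops. -/
structure Topo where
  V : Type
  fintypeV : Fintype V
  decEqV : DecidableEq V
  nonemptyV : Nonempty V
  E : V → V → Prop
  no_self_loops : ∀ v, ¬ E v v

attribute [instance] Topo.fintypeV Topo.decEqV Topo.nonemptyV

/-- `Mark k d`: the type of `d`-th markings (independent of the topology). -/
def Mark (k : ℕ) : ℕ → Type
  | 0 => Finset (Fin k)
  | d + 1 => Set (List (Mark k d))

def Mark.toSet {k d : ℕ} (m : Mark k (d + 1)) : Set (List (Mark k d)) := m

/-- The labeling `Λ`: `Λ (g i) = {i}` and `Λ v = ∅` for unmarked `v`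
(for injective `g`). -/
def lab {k : ℕ} (G : Topo) (g : Fin k → G.V) (v : G.V) : Finset (Fin k) :=
  Finset.univ.filter fun i => g i = v

/-- `InX G g v π`: `π` is a directed path starting at `v`, ending at a marked
vertex, with all non-final vertices unmarked.  (The set `X(v)` of the paper.) -/
def InX {k : ℕ} (G : Topo) (g : Fin k → G.V) (v : G.V) (π : List G.V) : Prop :=
  π ≠ [] ∧ π.head? = some v ∧ List.Chain' G.E π ∧
    (∀ u ∈ π.dropLast, u ∉ Set.range g) ∧
    ∃ w ∈ Set.range g, π.getLast? = some w

/-- The `d`-th marking `μ_d`. -/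
noncomputable def mu {k : ℕ} (G : Topo) (g : Fin k → G.V) : (d : ℕ) → G.V → Mark k d
  | 0, v => lab G g v
  | d + 1, v => { s : List (Mark k d) | ∃ π : List G.V, InX G g v π ∧ s = dst (π.map (mu G g d)) }

lemma destutter'_head? {α : Type} (R : α → α → Prop) [DecidableRel R] :
    ∀ (l : List α) (a : α), (List.destutter' R a l).head? = some a
  | [], _ => rfl
  | b :: l, a => by
    rw [List.destutter']
    split
    · rfl
    · exact destutter'_head? R l a

lemma dst_head? {α : Type} (a : α) (l : List α) : (dst (a :: l)).head? = some a := by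
  simp [dst, List.destutter_cons', destutter'_head?]

lemma mu_head {k : ℕ} (G : Topo) (g : Fin k → G.V) (d : ℕ) (u : G.V) (π : List G.V)
    (hπ : InX G g u π) : (dst (π.map (mu G g d))).head? = some (mu G g d u) := by
  obtain ⟨hne, hhd, -⟩ := hπ
  cases π with
  | nil => exact absurd rfl hne
  | cons a t =>
    obtain rfl : a = u := by simpa using hhd
    simp [dst_head?]

lemma lab_empty {k : ℕ} (G : Topo) (g : Fin k → G.V) (u : G.V)
    (hu : ¬ ∃ π, InX G g u π) : lab G g u = ∅ := by
  by_contra hne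
  obtain ⟨i, hi⟩ := Finset.nonempty_iff_ne_empty.2 hne
  have hgi : g i = u := by simpa [lab] using hi
  exact hu ⟨[u], by simp, rfl, by constructor, by simp, ⟨u, ⟨i, hgi⟩, rfl⟩⟩

lemma mem_mu_succ {k : ℕ} (G : Topo) (g : Fin k → G.V) (d : ℕ) (u : G.V)
    (s : List (Mark k d)) :
    s ∈ Mark.toSet (mu G g (d+1) u) ↔ ∃ π, InX G g u π ∧ s = dst (π.map (mu G g d)) :=
  Iff.rfl

lemma key {k : ℕ} (G : Topo) (g : Fin k → G.V) (d : ℕ) (u v : G.V)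
    (h : mu G g (d+1) u = mu G g (d+1) v) : mu G g d u = mu G g d v := by
  by_cases hu : ∃ π, InX G g u π
  · obtain ⟨π, hπ⟩ := hu
    have h1 : dst (π.map (mu G g d)) ∈ Mark.toSet (mu G g (d+1) v) := by
      rw [← h]; exact (mem_mu_succ G g d u _).2 ⟨π, hπ, rfl⟩
    obtain ⟨π', hπ', heq⟩ := (mem_mu_succ G g d v _).1 h1
    have h2 := mu_head G g d u π hπ
    rw [heq, mu_head G g d v π' hπ'] at h2
    exact (Option.some.inj h2).symm
  · have hv : ¬ ∃ π, InX G g v π := by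
      rintro ⟨π, hπ⟩
      have h1 : dst (π.map (mu G g d)) ∈ Mark.toSet (mu G g (d+1) u) := by
        rw [h]; exact (mem_mu_succ G g d v _).2 ⟨π, hπ, rfl⟩
      obtain ⟨π', hπ', -⟩ := (mem_mu_succ G g d u _).1 h1
      exact hu ⟨π', hπ'⟩
    cases d with
    | zero =>
      show lab G g u = lab G g v
      rw [lab_empty G g u hu, lab_empty G g v hv]
    | succ d' =>
      apply Set.ext
      intro s
      constructor
      · rintro ⟨π, hπ, -⟩; exact absurd ⟨π, hπ⟩ hu
      · rintro ⟨π, hπ, -⟩; exact absurd ⟨π, hπ⟩ hv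

lemma step_down {k : ℕ} (G : Topo) (g : Fin k → G.V) :
    ∀ d, ∀ u v : G.V, mu G g d u = mu G g d v →
      ∀ j ≤ d, mu G g j u = mu G g j v := by
  intro d
  induction d with
  | zero =>
    intro u v h j hj
    interval_cases j
    exact h
  | succ d ih =>
    intro u v h j hj
    rcases Nat.lt_or_ge j (d+1) with hlt | hge
    · exact ih u v (key G g d u v h) j (Nat.lt_succ_iff.1 hlt)
    · obtain rfl : j = d + 1 := le_antisymm hj hge
      exact h

/-- `∼_d` refines `∼_j` for `j ≤ d`; in particular the labeling
`Λ` is constant on `∼_d`-classes. -/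
theorem stmt1 {k : ℕ} (hk : 1 ≤ k) (G : Topo) (g : Fin k → G.V)
    (hg : Function.Injective g) (d j : ℕ) (hj : j ≤ d) (u v : G.V)
    (h : mu G g d u = mu G g d v) :
    mu G g j u = mu G g j v ∧ lab G g u = lab G g v := by
  refine ⟨step_down G g d u v h j hj, ?_⟩
  exact step_down G g d u v h 0 (Nat.zero_le d)
end

section
/- Let G be the uni-directional ring of size n ≥ 2 with marked k-tuple ḡ, where 1 ≤ k ≤ n. For an unmarked vertex v, let f(v) be the first marked vertex in the sequence v+1, v+2, … (addition in ZMod n). Then for every d ≥ 1 and every unmarked vertex v, μ_d(v) is the singleton { List.destutter (· ≠ ·) [μ_{d−1}(v), μ_{d−1}(f(v))] }; moreover, for all d ≥ 0, any two unmarked vertices u, v with f(u) = f(v) satisfy μ_d(u) = μ_d(v). -/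
/-- The uni-directional ring of size `n ≥ 2`: vertices `ZMod n`, edges `(i, i+1)`. -/
def uniRing (n : ℕ) (hn : 2 ≤ n) : Topo :=
  haveI : NeZero n := ⟨by omega⟩
  haveI : Fact (1 < n) := ⟨by omega⟩
  { V := ZMod n
    fintypeV := inferInstance
    decEqV := inferInstance
    nonemptyV := inferInstance
    E := fun i j => j = i + 1
    no_self_loops := fun _ h => one_ne_zero (left_eq_add.mp h) }

/-- `firstMarkedFwd g v w`: `w` is the first marked vertex (i.e. vertex in the
range of `g`) in the sequence `v+1, v+2, …`. -/
def firstMarkedFwd {k : ℕ} (n : ℕ) (g : Fin k → ZMod n) (v w : ZMod n) : Prop :=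
  ∃ j : ℕ, 1 ≤ j ∧ w = v + (j : ZMod n) ∧ w ∈ Set.range g ∧
    ∀ i : ℕ, 1 ≤ i → i < j → (v + (i : ZMod n)) ∉ Set.range g

section Aux

variable {α : Type}

lemma aux_destutter'_replicate (a : α) (t : List α) :
    ∀ m : ℕ, @List.destutter' α (· ≠ ·) (fun _ _ => Classical.dec _) a
        (List.replicate m a ++ t)
      = @List.destutter' α (· ≠ ·) (fun _ _ => Classical.dec _) a t := by
  intro m
  induction m with
  | zero => rfl
  | succ m ih =>
    rw [List.replicate_succ, List.cons_append, List.destutter'_cons,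
      if_neg (not_not_intro rfl), ih]

lemma aux_dst_replicate (a b : α) (j : ℕ) (hj : 1 ≤ j) :
    dst (List.replicate j a ++ [b]) = dst [a, b] := by
  obtain ⟨m, rfl⟩ : ∃ m, j = m + 1 := ⟨j - 1, by omega⟩
  show @List.destutter α (· ≠ ·) (fun _ _ => Classical.dec _) _ = _
  rw [List.replicate_succ, List.cons_append, List.destutter_cons',
    aux_destutter'_replicate]
  rfl

lemma aux_ring_chain_form {n : ℕ} (hn : 2 ≤ n) :
    ∀ (π : List (ZMod n)) (v : ZMod n), List.Chain' (uniRing n hn).E π →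
      π.head? = some v →
      π = (List.range π.length).map (fun i : ℕ => v + (i : ZMod n)) := by
  intro π
  induction π with
  | nil => intro v _ h; simp at h
  | cons x l ih =>
    intro v hc hh
    have hx : x = v := by simpa using hh
    subst hx
    match l, hc with
    | [], _ => simp [List.range_succ]
    | y :: l', hc =>
      have h1 : y = x + 1 := (List.isChain_cons_cons.mp hc).1
      have h2 := ih (x + 1) (h1 ▸ (List.isChain_cons_cons.mp hc).2) (by simp [h1])
      show x :: y :: l' =
        (List.range ((y :: l').length + 1)).map (fun i : ℕ => x + (i : ZMod n))
      rw [List.range_succ_eq_map, List.map_cons, List.map_map]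
      congr 1
      · simp
      · refine h2.trans (List.map_congr_left fun i _ => ?_)
        simp only [Function.comp_apply, Nat.succ_eq_add_one]
        push_cast
        ring

lemma aux_inX_ring_iff {k n : ℕ} (hn : 2 ≤ n) (g : Fin k → ZMod n) (v : ZMod n)
    (hv : v ∉ Set.range g) (j : ℕ) (hj1 : 1 ≤ j)
    (hw : v + (j : ZMod n) ∈ Set.range g)
    (hmin : ∀ i : ℕ, 1 ≤ i → i < j → v + (i : ZMod n) ∉ Set.range g)
    (π : List (ZMod n)) :
    InX (uniRing n hn) g v π ↔
      π = (List.range (j + 1)).map (fun i : ℕ => v + (i : ZMod n)) := by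
  dsimp only [InX, uniRing]
  constructor
  · rintro ⟨hne, hh, hc, hdl, w, hwr, hlast⟩
    have hform := aux_ring_chain_form hn π v hc hh
    obtain ⟨t, ht⟩ : ∃ t, π.length = t + 1 := by
      cases hl : π.length with
      | zero => exact absurd (List.length_eq_zero_iff.mp hl) hne
      | succ t => exact ⟨t, rfl⟩
    rw [ht] at hform
    have hlast' : π.getLast? = some (v + (t : ZMod n)) := by
      rw [hform]
      simp only [List.range_succ, List.map_append, List.map_cons, List.map_nil]
      exact List.getLast?_concat
    have hwt : v + (t : ZMod n) ∈ Set.range g := by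
      rw [hlast'] at hlast
      rw [Option.some_inj.mp hlast]
      exact hwr
    have hdl' : ∀ i : ℕ, i < t → v + (i : ZMod n) ∉ Set.range g := by
      intro i hi
      apply hdl
      rw [hform]
      simp only [List.range_succ, List.map_append, List.map_cons, List.map_nil,
        List.dropLast_concat]
      exact List.mem_map.2 ⟨i, List.mem_range.2 hi, rfl⟩
    have ht0 : 1 ≤ t := by
      by_contra h
      have : t = 0 := by omega
      subst this
      rw [Nat.cast_zero, add_zero] at hwt
      exact hv hwt
    have htj : t = j := by
      rcases lt_trichotomy t j with h | h | h
      · exact absurd hwt (hmin t ht0 h)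
      · exact h
      · exact absurd hw (hdl' j h)
    rw [htj] at hform
    exact hform
  · rintro rfl
    refine ⟨by simp, ?_, ?_, ?_, v + (j : ZMod n), hw, ?_⟩
    · rw [List.head?_map, List.range_succ_eq_map]
      simp
    · refine (List.isChain_map _).2 ?_
      refine (List.isChain_range_succ _ j).2 fun m _ => ?_
      show v + ((m + 1 : ℕ) : ZMod n) = v + (m : ZMod n) + 1
      push_cast
      ring
    · intro u hu
      simp only [List.range_succ, List.map_append, List.map_cons, List.map_nil,
        List.dropLast_concat] at hu
      obtain ⟨i, hi, rfl⟩ := List.mem_map.1 hu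
      rw [List.mem_range] at hi
      rcases Nat.eq_zero_or_pos i with h | h
      · subst h; rw [Nat.cast_zero, add_zero]; exact hv
      · exact hmin i h hi
    · simp only [List.range_succ, List.map_append, List.map_cons, List.map_nil]
      exact List.getLast?_concat

end Aux

/-- in the uni-directional ring of size `n`, with `f v` the first
marked vertex after `v`, for `d ≥ 1` (written `d + 1`) and unmarked `v`,
`μ_{d+1}(v) = { destutter [μ_d(v), μ_d(f v)] }`; moreover unmarked vertices with
the same `f`-value have the same marking at every level `d`. -/
theorem stmt5 {k n : ℕ} (hk : 1 ≤ k) (hkn : k ≤ n) (hn : 2 ≤ n)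
    (g : Fin k → ZMod n) (hg : Function.Injective g)
    (f : ZMod n → ZMod n)
    (hf : ∀ v : ZMod n, v ∉ Set.range g → firstMarkedFwd n g v (f v)) :
    (∀ (d : ℕ) (v : ZMod n), v ∉ Set.range g →
      Mark.toSet (mu (uniRing n hn) g (d + 1) v) =
        {dst [mu (uniRing n hn) g d v, mu (uniRing n hn) g d (f v)]}) ∧
    (∀ (d : ℕ) (u v : ZMod n), u ∉ Set.range g → v ∉ Set.range g → f u = f v →
      mu (uniRing n hn) g d u = mu (uniRing n hn) g d v) := by
  set G := uniRing n hn with hG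
  have uniq : ∀ v w w', firstMarkedFwd n g v w → firstMarkedFwd n g v w' → w = w' := by
    rintro v w w' ⟨j, hj1, rfl, hw, hmin⟩ ⟨j', hj1', rfl, hw', hmin'⟩
    rcases lt_trichotomy j j' with h | h | h
    · exact absurd hw (hmin' j hj1 h)
    · rw [h]
    · exact absurd hw' (hmin j' hj1' h)
  have step : ∀ d : ℕ,
      (∀ u v : ZMod n, u ∉ Set.range g → v ∉ Set.range g → f u = f v →
        mu G g d u = mu G g d v) →
      ∀ v : ZMod n, v ∉ Set.range g →
        Mark.toSet (mu G g (d + 1) v) = {dst [mu G g d v, mu G g d (f v)]} := by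
    intro d ih v hv
    obtain ⟨j, hj1, hfv, hwm, hmin⟩ := hf v hv
    have hwm' : v + (j : ZMod n) ∈ Set.range g := hfv ▸ hwm
    have hiff := aux_inX_ring_iff hn g v hv j hj1 hwm' hmin
    have hcompute :
        dst (((List.range (j + 1)).map (fun i : ℕ => v + (i : ZMod n))).map (mu G g d))
          = dst [mu G g d v, mu G g d (f v)] := by
      have hrepl : ((List.range j).map fun i : ℕ => mu G g d (v + (i : ZMod n)))
          = List.replicate j (mu G g d v) := by
        refine List.eq_replicate_iff.2 ⟨by simp, ?_⟩
        intro b hb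
        obtain ⟨i, hi, rfl⟩ := List.mem_map.1 hb
        rw [List.mem_range] at hi
        rcases Nat.eq_zero_or_pos i with h | h
        · subst h; rw [Nat.cast_zero, add_zero]
        · -- v + i is unmarked and has the same first marked vertex as v
          have hui : v + (i : ZMod n) ∉ Set.range g := hmin i h hi
          have hfi : firstMarkedFwd n g (v + (i : ZMod n)) (f v) := by
            refine ⟨j - i, by omega, ?_, hfv ▸ hwm, ?_⟩
            · rw [hfv]
              have : (j : ZMod n) = (i : ZMod n) + ((j - i : ℕ) : ZMod n) := by
                rw [← Nat.cast_add]
                congr 1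
                omega
              rw [this, add_assoc]
            · intro m hm1 hm2
              have : v + (i : ZMod n) + (m : ZMod n) = v + ((i + m : ℕ) : ZMod n) := by
                push_cast; ring
              rw [this]
              exact hmin (i + m) (by omega) (by omega)
          have hfeq : f (v + (i : ZMod n)) = f v :=
            uniq _ _ _ (hf _ hui) hfi
          exact ih _ v hui hv hfeq
      erw [List.map_map, List.range_succ, List.map_append]
      have : (List.range j).map ((mu G g d) ∘ fun i : ℕ => v + (i : ZMod n))
          = List.replicate j (mu G g d v) := hrepl
      rw [this]
      simp only [List.map_cons, List.map_nil, Function.comp_apply]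
      erw [Function.comp_apply, show mu G g d (v + (j : ZMod n)) = mu G g d (f v) by rw [hfv]]
      exact aux_dst_replicate _ _ j hj1
    ext s
    simp only [Set.mem_singleton_iff]
    constructor
    · rintro ⟨π, hπ, rfl⟩
      erw [hiff] at hπ
      subst hπ
      exact hcompute
    · rintro rfl
      exact ⟨_, (hiff _).mpr rfl, hcompute.symm⟩
  have main : ∀ d : ℕ, ∀ u v : ZMod n, u ∉ Set.range g → v ∉ Set.range g →
      f u = f v → mu G g d u = mu G g d v := by
    intro d
    induction d with
    | zero =>
      intro u v hu hv _
      show lab G g u = lab G g v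
      have hlab : ∀ w : ZMod n, w ∉ Set.range g → lab G g w = ∅ := by
        intro w hw
        ext i
        simp only [lab, Finset.mem_filter, Finset.mem_univ, true_and,
          Finset.notMem_empty, iff_false]
        intro h
        exact hw ⟨i, h⟩
      rw [hlab u hu, hlab v hv]
    | succ d ih =>
      intro u v hu hv hfe
      have h1 := step d ih u hu
      have h2 := step d ih v hv
      show Mark.toSet (mu G g (d + 1) u) = Mark.toSet (mu G g (d + 1) v)
      rw [h1, h2, ih u v hu hv hfe, hfe]
  exact ⟨fun d v hv => step d (main d) v hv, main⟩
end

section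
/- Let G be the uni-directional ring of size n ≥ 2 with marked k-tuple ḡ, where 1 ≤ k ≤ n. For every d ≥ 1 the equivalence ∼_d coincides with ∼_1, and the number of ∼_d-equivalence classes of vertices is at most 2k. -/
section Lemmas

lemma destutter'_rep {α : Type} (R : α → α → Prop) [DecidableRel R] (t : ℕ) (m M : α)
    (h : R m M) (hmm : ¬ R m m) :
    List.destutter' R m (List.replicate t m ++ [M]) = [m, M] := by
  induction t with
  | zero => simp [List.destutter'_cons_pos _ h]
  | succ t ih =>
    rw [List.replicate_succ, List.cons_append, List.destutter'_cons_neg _ hmm, ih]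

lemma dst_replicate_append {α : Type} (t : ℕ) (m M : α) (h : m ≠ M) :
    dst (List.replicate (t + 1) m ++ [M]) = [m, M] := by
  have : List.replicate (t + 1) m ++ [M] = m :: (List.replicate t m ++ [M]) := by
    simp [List.replicate_succ]
  rw [dst, this, List.destutter_cons']
  exact @destutter'_rep α (· ≠ ·) (fun _ _ => Classical.dec _) t m M h (by simp)

lemma dst_single {α : Type} (a : α) : dst [a] = [a] :=
  @List.destutter_singleton α (· ≠ ·) (fun _ _ => Classical.dec _) a

end Lemmas

section Ring
variable {k n : ℕ}

lemma exists_fwd (hk : 1 ≤ k) [NeZero n] (g : Fin k → ZMod n) (v : ZMod n) :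
    ∃ j : ℕ, v + (j : ZMod n) ∈ Set.range g := by
  refine ⟨(g ⟨0, hk⟩ - v).val, ⟨0, hk⟩, ?_⟩
  rw [ZMod.natCast_val, ZMod.cast_id]
  ring

noncomputable def jj (hk : 1 ≤ k) [NeZero n] (g : Fin k → ZMod n) (v : ZMod n) : ℕ :=
  @Nat.find _ (Classical.decPred _) (exists_fwd hk g v)

variable (hk : 1 ≤ k) [NeZero n] (g : Fin k → ZMod n)

lemma jj_spec (v : ZMod n) : v + (jj hk g v : ZMod n) ∈ Set.range g :=
  @Nat.find_spec _ (Classical.decPred _) (exists_fwd hk g v)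

lemma jj_min (v : ZMod n) {i : ℕ} (h : i < jj hk g v) : v + (i : ZMod n) ∉ Set.range g :=
  @Nat.find_min _ (Classical.decPred _) (exists_fwd hk g v) _ h

lemma jj_le (v : ZMod n) {t : ℕ} (h : v + (t : ZMod n) ∈ Set.range g) : jj hk g v ≤ t :=
  @Nat.find_min' _ (Classical.decPred _) (exists_fwd hk g v) _ h

lemma jj_eq_zero_iff (v : ZMod n) : jj hk g v = 0 ↔ v ∈ Set.range g := by
  rw [jj, @Nat.find_eq_zero _ (Classical.decPred _)]
  simp

lemma jj_pos (v : ZMod n) (h : v ∉ Set.range g) : 1 ≤ jj hk g v := by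
  rcases Nat.eq_zero_or_pos (jj hk g v) with h0 | h1
  · exact absurd ((jj_eq_zero_iff hk g v).mp h0) h
  · exact h1

lemma jj_shift (v : ZMod n) {i : ℕ} (h : i ≤ jj hk g v) :
    jj hk g (v + (i : ZMod n)) = jj hk g v - i := by
  have hle : jj hk g (v + (i : ZMod n)) ≤ jj hk g v - i := by
    apply jj_le
    have : ((jj hk g v - i : ℕ) : ZMod n) = (jj hk g v : ZMod n) - (i : ZMod n) := by
      rw [Nat.cast_sub h]
    rw [this]
    have : v + (i : ZMod n) + ((jj hk g v : ZMod n) - (i : ZMod n)) = v + (jj hk g v : ZMod n) := by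
      ring
    rw [this]
    exact jj_spec hk g v
  have hge : jj hk g v - i ≤ jj hk g (v + (i : ZMod n)) := by
    by_contra hc
    push_neg at hc
    have hlt : i + jj hk g (v + (i : ZMod n)) < jj hk g v := by omega
    have := jj_spec hk g (v + (i : ZMod n))
    rw [show v + (i : ZMod n) + ((jj hk g (v + (i:ZMod n)) : ℕ) : ZMod n)
        = v + ((i + jj hk g (v + (i:ZMod n)) : ℕ) : ZMod n) by push_cast; ring] at this
    exact jj_min hk g v hlt this
  omega

end Ring

section Path
variable {k n : ℕ}

def ringPath (n : ℕ) (v : ZMod n) (t : ℕ) : List (ZMod n) :=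
  (List.range (t + 1)).map (fun i : ℕ => v + (i : ZMod n))

lemma ringPath_concat (v : ZMod n) (t : ℕ) :
    ringPath n v t = (List.range t).map (fun i : ℕ => v + (i : ZMod n)) ++ [v + (t : ZMod n)] := by
  rw [ringPath, List.range_succ, List.map_append, List.map_singleton]

lemma ringPath_ne_nil (v : ZMod n) (t : ℕ) : ringPath n v t ≠ [] := by
  simp [ringPath]

lemma ringPath_head (v : ZMod n) (t : ℕ) : (ringPath n v t).head? = some v := by
  rw [ringPath, List.range_succ_eq_map, List.map_cons, List.head?_cons]
  simp

lemma ringPath_getLast (v : ZMod n) (t : ℕ) :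
    (ringPath n v t).getLast? = some (v + (t : ZMod n)) := by
  rw [ringPath_concat, List.getLast?_concat]

lemma ringPath_dropLast (v : ZMod n) (t : ℕ) :
    (ringPath n v t).dropLast = (List.range t).map (fun i : ℕ => v + (i : ZMod n)) := by
  rw [ringPath_concat, List.dropLast_concat]

lemma ringPath_length (v : ZMod n) (t : ℕ) : (ringPath n v t).length = t + 1 := by
  simp [ringPath]

lemma ringPath_chain (hn : 2 ≤ n) (v : ZMod n) (t : ℕ) :
    List.Chain' (uniRing n hn).E (ringPath n v t) := by
  show List.IsChain (fun i j : ZMod n => j = i + 1) (ringPath n v t)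
  rw [ringPath, List.isChain_map]
  rw [show t + 1 = (t : ℕ).succ from rfl, List.isChain_range_succ]
  intro m _
  show v + ((m + 1 : ℕ) : ZMod n) = v + (m : ZMod n) + 1
  push_cast; ring

lemma chain_head (hn : 2 ≤ n) :
    ∀ (π : List (ZMod n)) (v : ZMod n), π.head? = some v → List.Chain' (uniRing n hn).E π →
      π = (List.range π.length).map (fun i : ℕ => v + (i : ZMod n)) := by
  intro π
  induction π with
  | nil => intro v h; simp at h
  | cons a l ih =>
    intro v hh hc
    rw [List.head?_cons, Option.some_inj] at hh
    subst hh
    cases l with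
    | nil => simp [List.range_succ_eq_map]
    | cons b l' =>
      change List.IsChain (fun i j : ZMod n => j = i + 1) (a :: b :: l') at hc
      rw [List.isChain_cons_cons] at hc
      have hb : b = a + 1 := hc.1
      have h2 := ih (a + 1) (by rw [List.head?_cons, hb]) hc.2
      have hfun : ((fun i : ℕ => a + (i : ZMod n)) ∘ Nat.succ)
          = fun i : ℕ => (a + 1) + (i : ZMod n) := by
        funext i
        show a + ((i + 1 : ℕ) : ZMod n) = (a + 1) + (i : ZMod n)
        push_cast; ring
      rw [List.length_cons, List.range_succ_eq_map, List.map_cons, List.map_map, hfun]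
      rw [Nat.cast_zero, add_zero, ← h2]

end Path

section XChar
variable {k n : ℕ} (hk : 1 ≤ k) (hn : 2 ≤ n)

lemma inX_iff [NeZero n] (g : Fin k → ZMod n) (v : ZMod n) (π : List (ZMod n)) :
    InX (uniRing n hn) g v π ↔ π = ringPath n v (jj hk g v) := by
  constructor
  · rintro ⟨hne, hh, hc, hdl, w, hw, hl⟩
    have hlen : π.length = (π.length - 1) + 1 := by
      cases π with
      | nil => exact absurd rfl hne
      | cons a l => simp
    set t := π.length - 1 with ht
    have hπ : π = ringPath n v t := by
      rw [ringPath, ← hlen]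
      exact chain_head hn π v hh hc
    have hwt : w = v + (t : ZMod n) := by
      erw [hπ, ringPath_getLast] at hl
      exact (Option.some_inj.mp hl).symm
    have hjle : jj hk g v ≤ t := jj_le hk g v (hwt ▸ hw)
    have hfree : ∀ i : ℕ, i < t → v + (i : ZMod n) ∉ Set.range g := by
      intro i hi
      apply hdl
      erw [hπ, ringPath_dropLast]
      show v + (i : ZMod n) ∈ (List.range t).map (fun i : ℕ => v + (i : ZMod n))
      simp only [List.mem_map, List.mem_range]
      exact ⟨i, hi, rfl⟩
    have : t ≤ jj hk g v := by
      by_contra hcon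
      push_neg at hcon
      exact hfree _ hcon (jj_spec hk g v)
    have : t = jj hk g v := le_antisymm this hjle
    rw [hπ, this]
  · rintro rfl
    refine ⟨ringPath_ne_nil v _, ringPath_head v _, ringPath_chain hn v _, ?_, ?_⟩
    · intro u hu
      erw [ringPath_dropLast] at hu
      replace hu := List.mem_map.mp hu
      simp only [List.mem_range] at hu
      obtain ⟨i, hi, rfl⟩ := hu
      exact jj_min hk g v hi
    · exact ⟨v + (jj hk g v : ZMod n), jj_spec hk g v, ringPath_getLast v _⟩

lemma mu_succ [NeZero n] (g : Fin k → ZMod n) (d : ℕ) (v : ZMod n) :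
    Mark.toSet (mu (uniRing n hn) g (d + 1) v)
      = {dst ((ringPath n v (jj hk g v)).map (mu (uniRing n hn) g d))} := by
  apply Set.ext
  intro s
  show (∃ π, InX (uniRing n hn) g v π ∧ s = dst (π.map (mu (uniRing n hn) g d))) ↔ _
  rw [Set.mem_singleton_iff]
  constructor
  · rintro ⟨π, hπ, rfl⟩
    rw [(inX_iff hk hn g v π).mp hπ]
  · rintro rfl
    exact ⟨ringPath n v (jj hk g v), (inX_iff hk hn g v _).mpr rfl, rfl⟩

end XChar

section Main
variable {k n : ℕ} (hk : 1 ≤ k) (hn : 2 ≤ n) [NeZero n]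

lemma lab_empty_s6 (g : Fin k → ZMod n) (v : ZMod n) (hv : v ∉ Set.range g) :
    lab (uniRing n hn) g v = ∅ := by
  simp only [lab, Finset.filter_eq_empty_iff]
  intro i _ h
  exact hv ⟨i, h⟩

lemma lab_ne_empty (g : Fin k → ZMod n) (v : ZMod n) (hv : v ∈ Set.range g) :
    lab (uniRing n hn) g v ≠ ∅ := by
  obtain ⟨i, hi⟩ := hv
  intro h
  have hmem : i ∈ lab (uniRing n hn) g v := by
    simp only [lab, Finset.mem_filter]
    exact ⟨Finset.mem_univ i, hi⟩
  rw [h] at hmem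
  exact absurd hmem (Finset.notMem_empty i)

lemma lab_inj (g : Fin k → ZMod n) (u v : ZMod n) (hu : u ∈ Set.range g)
    (h : lab (uniRing n hn) g u = lab (uniRing n hn) g v) : u = v := by
  obtain ⟨i, hi⟩ := hu
  have hmem : i ∈ lab (uniRing n hn) g u := by
    simp only [lab, Finset.mem_filter]
    exact ⟨Finset.mem_univ i, hi⟩
  rw [h] at hmem
  simp only [lab, Finset.mem_filter] at hmem
  rw [← hi, hmem.2]

lemma w_shift (g : Fin k → ZMod n) (v : ZMod n) {i : ℕ} (h : i ≤ jj hk g v) :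
    (v + (i : ZMod n)) + ((jj hk g (v + (i : ZMod n)) : ℕ) : ZMod n)
      = v + ((jj hk g v : ℕ) : ZMod n) := by
  rw [jj_shift hk g v h, Nat.cast_sub h]
  ring

lemma key_s6 (g : Fin k → ZMod n) (d : ℕ)
    (hconst : ∀ v : ZMod n, v ∉ Set.range g → ∀ i : ℕ, i < jj hk g v →
      mu (uniRing n hn) g d (v + (i : ZMod n)) = mu (uniRing n hn) g d v)
    (hne : ∀ v : ZMod n, v ∉ Set.range g →
      mu (uniRing n hn) g d v ≠ mu (uniRing n hn) g d (v + (jj hk g v : ZMod n)))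
    (hmr : ∀ u v : ZMod n, u ∈ Set.range g → v ∈ Set.range g →
      (mu (uniRing n hn) g d u = mu (uniRing n hn) g d v ↔ u = v))
    (huu : ∀ u v : ZMod n, u ∉ Set.range g → v ∉ Set.range g →
      u + (jj hk g u : ZMod n) = v + (jj hk g v : ZMod n) →
      mu (uniRing n hn) g d u = mu (uniRing n hn) g d v) :
    ∀ u v : ZMod n,
      mu (uniRing n hn) g (d + 1) u = mu (uniRing n hn) g (d + 1) v ↔
        ((u ∈ Set.range g ↔ v ∈ Set.range g) ∧
          u + (jj hk g u : ZMod n) = v + (jj hk g v : ZMod n)) := by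
  have toSet_iff : ∀ (m m' : Mark k (d + 1)), m = m' ↔ m.toSet = m'.toSet :=
    fun _ _ => Iff.rfl
  have formM : ∀ v : ZMod n, v ∈ Set.range g →
      Mark.toSet (mu (uniRing n hn) g (d + 1) v) = {[mu (uniRing n hn) g d v]} := by
    intro v hv
    rw [mu_succ hk hn g d v, (jj_eq_zero_iff hk g v).mpr hv]
    have : ringPath n v 0 = [v] := by
      rw [ringPath, List.range_succ, List.range_zero, List.nil_append, List.map_singleton,
        Nat.cast_zero, add_zero]
    erw [this, List.map_singleton, dst_single]
  have formU : ∀ v : ZMod n, v ∉ Set.range g →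
      Mark.toSet (mu (uniRing n hn) g (d + 1) v)
        = {[mu (uniRing n hn) g d v,
            mu (uniRing n hn) g d (v + (jj hk g v : ZMod n))]} := by
    intro v hv
    erw [mu_succ hk hn g d v, ringPath_concat, List.map_append, List.map_singleton]
    have hrep : ((List.range (jj hk g v)).map
        (fun i : ℕ => v + (i : ZMod n))).map (mu (uniRing n hn) g d)
        = List.replicate (jj hk g v) (mu (uniRing n hn) g d v) := by
      rw [List.eq_replicate_iff]
      constructor
      · exact (List.length_map ..).trans ((List.length_map ..).trans (List.length_range ..))
      · intro b hb
        replace hb := List.mem_map.mp hb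
        obtain ⟨x, hx, rfl⟩ := hb
        replace hx := List.mem_map.mp hx
        obtain ⟨i, hi, rfl⟩ := hx
        rw [List.mem_range] at hi
        exact hconst v hv i hi
    rw [hrep]
    obtain ⟨t, ht⟩ : ∃ t, jj hk g v = t + 1 :=
      ⟨jj hk g v - 1, by have := jj_pos hk g v hv; omega⟩
    rw [ht]
    rw [dst_replicate_append t _ _ (by rw [← ht]; exact hne v hv)]
  intro u v
  by_cases hu : u ∈ Set.range g <;> by_cases hv : v ∈ Set.range g
  · -- both marked
    rw [toSet_iff, formM u hu, formM v hv, Set.singleton_eq_singleton_iff]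
    have hju : jj hk g u = 0 := (jj_eq_zero_iff hk g u).mpr hu
    have hjv : jj hk g v = 0 := (jj_eq_zero_iff hk g v).mpr hv
    simp only [hju, hjv, Nat.cast_zero, add_zero]
    constructor
    · intro h
      have := (hmr u v hu hv).mp (by injection h)
      exact ⟨iff_of_true hu hv, this⟩
    · rintro ⟨-, rfl⟩
      rfl
  · rw [toSet_iff, formM u hu, formU v hv, Set.singleton_eq_singleton_iff]
    constructor
    · intro h; exact absurd (congrArg List.length h) (by simp)
    · rintro ⟨h, -⟩; exact absurd (h.mp hu) hv
  · rw [toSet_iff, formU u hu, formM v hv, Set.singleton_eq_singleton_iff]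
    constructor
    · intro h; exact absurd (congrArg List.length h) (by simp)
    · rintro ⟨h, -⟩; exact absurd (h.mpr hv) hu
  · -- both unmarked
    rw [toSet_iff, formU u hu, formU v hv, Set.singleton_eq_singleton_iff]
    constructor
    · intro h
      have h1 : mu (uniRing n hn) g d (u + (jj hk g u : ZMod n))
          = mu (uniRing n hn) g d (v + (jj hk g v : ZMod n)) := by
        injection h with h h'
        injection h' with h' _
      exact ⟨iff_of_false hu hv,
        (hmr _ _ (jj_spec hk g u) (jj_spec hk g v)).mp h1⟩
    · rintro ⟨-, hw⟩
      rw [huu u v hu hv hw, hw]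

lemma main (g : Fin k → ZMod n) :
    ∀ d : ℕ, 1 ≤ d → ∀ u v : ZMod n,
      mu (uniRing n hn) g d u = mu (uniRing n hn) g d v ↔
        ((u ∈ Set.range g ↔ v ∈ Set.range g) ∧
          u + (jj hk g u : ZMod n) = v + (jj hk g v : ZMod n)) := by
  intro d
  induction d with
  | zero => omega
  | succ d ih =>
    intro _
    rcases Nat.eq_zero_or_pos d with rfl | hdpos
    · -- base case: d + 1 = 1, use mu 0 = lab facts
      apply key_s6 hk hn g 0
      · intro v hv i hi
        show lab (uniRing n hn) g _ = lab (uniRing n hn) g _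
        rw [lab_empty_s6 hn g _ (jj_min hk g v hi), lab_empty_s6 hn g v hv]
      · intro v hv
        show lab (uniRing n hn) g v ≠ lab (uniRing n hn) g _
        rw [lab_empty_s6 hn g v hv]
        exact fun h => lab_ne_empty hn g _ (jj_spec hk g v) h.symm
      · intro u v hu hv
        exact ⟨fun h => lab_inj hn g u v hu h, fun h => by rw [h]⟩
      · intro u v hu hv _
        show lab (uniRing n hn) g u = lab (uniRing n hn) g v
        rw [lab_empty_s6 hn g u hu, lab_empty_s6 hn g v hv]
    · have P := ih hdpos
      apply key_s6 hk hn g d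
      · intro v hv i hi
        apply (P _ _).mpr
        refine ⟨iff_of_false (jj_min hk g v hi) hv, ?_⟩
        exact w_shift hk g v (le_of_lt hi)
      · intro v hv h
        have := ((P _ _).mp h).1
        exact hv (this.mpr (jj_spec hk g v))
      · intro u v hu hv
        rw [P u v]
        have hju : jj hk g u = 0 := (jj_eq_zero_iff hk g u).mpr hu
        have hjv : jj hk g v = 0 := (jj_eq_zero_iff hk g v).mpr hv
        simp only [hju, hjv, Nat.cast_zero, add_zero]
        exact ⟨fun h => h.2, fun h => ⟨iff_of_true hu hv, h⟩⟩
      · intro u v hu hv hw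
        exact (P u v).mpr ⟨iff_of_false hu hv, hw⟩

end Main


/-- in the uni-directional ring of size `n`, for every `d ≥ 1` the
equivalence `∼_d` coincides with `∼_1`, and the number of `∼_d`-classes is at
most `2k`. -/
theorem stmt6 {k n : ℕ} (hk : 1 ≤ k) (hkn : k ≤ n) (hn : 2 ≤ n)
    (g : Fin k → ZMod n) (hg : Function.Injective g) (d : ℕ) (hd : 1 ≤ d) :
    (∀ u v : ZMod n,
      mu (uniRing n hn) g d u = mu (uniRing n hn) g d v ↔
        mu (uniRing n hn) g 1 u = mu (uniRing n hn) g 1 v) ∧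
    (Set.range (mu (uniRing n hn) g d)).ncard ≤ 2 * k := by
  haveI : NeZero n := ⟨by omega⟩
  have P := main hk hn g
  constructor
  · intro u v
    exact (P d hd u v).trans (P 1 le_rfl u v).symm
  · set S : Set (ZMod n) := Set.range g ∪ (fun x => x - 1) '' Set.range g with hS
    have key2 : ∀ v : ZMod n, ∃ u ∈ S, mu (uniRing n hn) g d u = mu (uniRing n hn) g d v := by
      intro v
      by_cases hv : v ∈ Set.range g
      · exact ⟨v, Or.inl hv, rfl⟩
      · have h1 := jj_pos hk g v hv
        refine ⟨v + ((jj hk g v - 1 : ℕ) : ZMod n), Or.inr ?_, ?_⟩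
        · refine ⟨v + ((jj hk g v : ℕ) : ZMod n), jj_spec hk g v, ?_⟩
          show v + ((jj hk g v : ℕ) : ZMod n) - 1 = v + ((jj hk g v - 1 : ℕ) : ZMod n)
          rw [Nat.cast_sub h1]
          push_cast
          ring
        · apply (P d hd _ _).mpr
          refine ⟨iff_of_false (jj_min hk g v (by omega)) hv, ?_⟩
          exact w_shift hk g v (by omega)
    have hsub : Set.range (mu (uniRing n hn) g d) ⊆ (mu (uniRing n hn) g d) '' S := by
      rintro _ ⟨v, rfl⟩
      obtain ⟨u, hu, he⟩ := key2 v
      exact ⟨u, hu, he⟩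
    have hSfin : S.Finite := Set.toFinite S
    have h1 : (Set.range (mu (uniRing n hn) g d)).ncard
        ≤ ((mu (uniRing n hn) g d) '' S).ncard :=
      Set.ncard_le_ncard hsub (hSfin.image _)
    have h2 : ((mu (uniRing n hn) g d) '' S).ncard ≤ S.ncard := Set.ncard_image_le hSfin
    have h3 : S.ncard ≤ (Set.range g).ncard + ((fun x => x - 1) '' Set.range g).ncard :=
      Set.ncard_union_le _ _
    have h4 : (Set.range g).ncard ≤ k := by
      rw [← Set.image_univ]
      refine le_trans (Set.ncard_image_le Set.finite_univ) ?_
      rw [Set.ncard_univ, Nat.card_eq_fintype_card, Fintype.card_fin]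
    have h5 : ((fun x => x - 1) '' Set.range g).ncard ≤ k :=
      le_trans (Set.ncard_image_le (Set.toFinite _)) h4
    omega
end

section
/- (Combinatorial core of the cutoff 2k for uni-directional rings.) Let k ≥ 1 and m, n ≥ 2k. For every k-tuple ḡ of pairwise distinct vertices of the uni-directional ring R_m of size m there exists a k-tuple h̄ of pairwise distinct vertices of the uni-directional ring R_n of size n such that for every d ≥ 0: (i) { μ_d(v) : v a vertex of R_m } = { μ_d(w) : w a vertex of R_n }, where markings are computed with respect to ḡ in R_m and with respect to h̄ in R_n; and (ii) for all distinct markings a, b in this common set, there is an edge (u, v) of R_m with μ_d(u) = a and μ_d(v) = b if and only if there is an edge (u', v') of R_n with μ_d(u') = a and μ_d(v') = b. -/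
namespace Stmt7Aux

open List

/-! ### destutter helpers -/

lemma destutter'_rep {α : Type} {R : α → α → Prop} [DecidableRel R]
    (hirr : ∀ x : α, ¬ R x x) (a b : α) (hab : R a b) :
    ∀ D : ℕ, List.destutter' R a (List.replicate D a ++ [b]) = [a, b]
  | 0 => by simp [List.destutter', hab, List.destutter'_nil]
  | D + 1 => by
    rw [List.replicate_succ, List.cons_append, List.destutter'_cons_neg _ (hirr a),
      destutter'_rep hirr a b hab D]

lemma dst_rep_concat {α : Type} (a b : α) (hab : a ≠ b) (D : ℕ) :
    dst (List.replicate D a ++ [b]) = if D = 0 then [b] else [a, b] := by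
  letI : DecidableRel (α := α) (· ≠ ·) := fun _ _ => Classical.dec _
  cases D with
  | zero => simp [dst]
  | succ D =>
    rw [dst, List.replicate_succ, List.cons_append, List.destutter_cons',
      destutter'_rep (R := (· ≠ ·)) (fun x hx => hx rfl) a b hab D]
    simp

end Stmt7Aux
set_option linter.unusedSectionVars false

namespace Stmt7Aux

section Ring

variable {k mm : ℕ} [NeZero mm] (g : Fin k → ZMod mm)

/-- The set of step counts that hit a marked vertex. -/
def hits (v : ZMod mm) : Set ℕ := {j : ℕ | v + (j : ZMod mm) ∈ Set.range g}

lemma hits_nonempty (hk : 1 ≤ k) (v : ZMod mm) : (hits g v).Nonempty := by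
  refine ⟨(g ⟨0, hk⟩ - v).val, ⟨⟨0, hk⟩, ?_⟩⟩
  rw [ZMod.natCast_val, ZMod.cast_id]
  ring

/-- Distance to the first marked vertex (0 if `v` itself is marked). -/
noncomputable def Dv (v : ZMod mm) : ℕ := sInf (hits g v)

lemma Dv_spec (hk : 1 ≤ k) (v : ZMod mm) : v + (Dv g v : ZMod mm) ∈ Set.range g :=
  Nat.sInf_mem (hits_nonempty g hk v)

lemma Dv_le {v : ZMod mm} {j : ℕ} (h : v + (j : ZMod mm) ∈ Set.range g) :
    Dv g v ≤ j := Nat.sInf_le h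

lemma Dv_min {v : ZMod mm} {t : ℕ} (h : t < Dv g v) :
    v + (t : ZMod mm) ∉ Set.range g := Nat.notMem_of_lt_sInf h

lemma Dv_eq {v : ZMod mm} {j : ℕ} (h : v + (j : ZMod mm) ∈ Set.range g)
    (hmin : ∀ t, t < j → v + (t : ZMod mm) ∉ Set.range g) : Dv g v = j := by
  refine le_antisymm (Dv_le g h) (le_of_not_gt fun hlt => ?_)
  exact hmin _ hlt (by exact Nat.sInf_mem (⟨j, h⟩ : (hits g v).Nonempty))

lemma Dv_eq_zero_iff (hk : 1 ≤ k) {v : ZMod mm} : Dv g v = 0 ↔ v ∈ Set.range g := by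
  constructor
  · intro h
    have := Dv_spec g hk v
    rw [h] at this
    simpa using this
  · intro h
    refine Nat.eq_zero_of_le_zero (Dv_le g ?_)
    simpa using h

lemma Dv_add (hk : 1 ≤ k) {v : ZMod mm} {t : ℕ} (ht : t ≤ Dv g v) :
    Dv g (v + (t : ZMod mm)) = Dv g v - t := by
  refine Dv_eq g ?_ ?_
  · have : v + (t : ZMod mm) + ((Dv g v - t : ℕ) : ZMod mm)
        = v + (Dv g v : ZMod mm) := by
      rw [add_assoc, ← Nat.cast_add, Nat.add_sub_cancel' ht]
    rw [this]
    exact Dv_spec g hk v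
  · intro s hs
    have : v + (t : ZMod mm) + (s : ZMod mm) = v + ((t + s : ℕ) : ZMod mm) := by
      push_cast; ring
    rw [this]
    exact Dv_min g (by omega)

variable (hk : 1 ≤ k)

/-- Index of a marked vertex (arbitrary if unmarked). -/
noncomputable def idxF (w : ZMod mm) : Fin k :=
  if h : w ∈ Set.range g then h.choose else ⟨0, hk⟩

lemma g_idxF {w : ZMod mm} (h : w ∈ Set.range g) : g (idxF g hk w) = w := by
  rw [idxF, dif_pos h]
  exact h.choose_spec

lemma idxF_g (hg : Function.Injective g) (i : Fin k) : idxF g hk (g i) = i :=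
  hg (g_idxF g hk ⟨i, rfl⟩)

/-- The abstract status of a vertex: `inl i` if marked with index `i`,
`inr j` if unmarked with first marked vertex forward `g j`. -/
noncomputable def tau (v : ZMod mm) : Fin k ⊕ Fin k :=
  if Dv g v = 0 then Sum.inl (idxF g hk v)
  else Sum.inr (idxF g hk (v + (Dv g v : ZMod mm)))

/-- The index of the first marked vertex strictly after `g i`. -/
noncomputable def Ng (i : Fin k) : Fin k :=
  idxF g hk (g i + 1 + (Dv g (g i + 1) : ZMod mm))

/-- `big i`: the gap after `g i` has length at least 2. -/
def big (i : Fin k) : Prop := Dv g (g i + 1) ≠ 0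

lemma g_Ng (i : Fin k) :
    g (Ng g hk i) = g i + 1 + (Dv g (g i + 1) : ZMod mm) :=
  g_idxF g hk (Dv_spec g hk (g i + 1))

lemma tau_g (hg : Function.Injective g) (i : Fin k) : tau g hk (g i) = Sum.inl i := by
  rw [tau, if_pos ((Dv_eq_zero_iff g hk).mpr ⟨i, rfl⟩), idxF_g g hk hg]

lemma tau_succ_g_big {i : Fin k} (h : big g i) :
    tau g hk (g i + 1) = Sum.inr (Ng g hk i) := by
  rw [tau, if_neg h, Ng]

lemma tau_succ_g_small {i : Fin k} (h : ¬ big g i) :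
    tau g hk (g i + 1) = Sum.inl (Ng g hk i) := by
  have h' : Dv g (g i + 1) = 0 := not_not.mp h
  rw [tau, if_pos h', Ng]
  congr 2
  rw [h']
  push_cast
  ring

end Ring

end Stmt7Aux
namespace Stmt7Aux

/-- Abstract markings as a function of the status. -/
def Mfun (k : ℕ) : (d : ℕ) → Fin k ⊕ Fin k → Mark k d
  | 0, Sum.inl i => ({i} : Finset (Fin k))
  | 0, Sum.inr _ => (∅ : Finset (Fin k))
  | d + 1, Sum.inl i => ({[Mfun k d (Sum.inl i)]} : Set (List (Mark k d)))
  | d + 1, Sum.inr j =>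
      ({[Mfun k d (Sum.inr j), Mfun k d (Sum.inl j)]} : Set (List (Mark k d)))

lemma Mfun_inl_ne_inr (k d : ℕ) (i j : Fin k) :
    Mfun k d (Sum.inl i) ≠ Mfun k d (Sum.inr j) := by
  cases d with
  | zero => exact fun h => Finset.singleton_ne_empty i h
  | succ d =>
    intro h
    have h2 : ([Mfun k d (Sum.inl i)] : List (Mark k d))
        = [Mfun k d (Sum.inr j), Mfun k d (Sum.inl j)] := by
      have := (Set.singleton_eq_singleton_iff).mp h
      exact this
    exact absurd (congrArg List.length h2) (by simp)

section URing

variable {k mm : ℕ} (hm2 : 2 ≤ mm) (g : Fin k → ZMod mm) (hk : 1 ≤ k)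

lemma uniRing_E {u v : ZMod mm} : (uniRing mm hm2).E u v ↔ v = u + 1 := Iff.rfl

lemma InX_uniRing (hk : 1 ≤ k) (v : ZMod mm) (π : List (ZMod mm)) :
    InX (uniRing mm hm2) g v π ↔
      π = List.map (fun t : ℕ => v + (t : ZMod mm)) (List.range (Dv g v + 1)) := by
  haveI : NeZero mm := ⟨by omega⟩
  constructor
  · rintro ⟨hne, hhead, hchain, hdrop, w, hw, hlast⟩
    replace hne : π ≠ [] := hne
    replace hhead : π.head? = some v := hhead
    replace hchain : List.Chain' (fun a b : ZMod mm => b = a + 1) π := hchain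
    replace hdrop : ∀ u ∈ π.dropLast, u ∉ Set.range g := hdrop
    replace hlast : π.getLast? = some (show ZMod mm from w) := hlast
    have hlen : 0 < π.length := List.length_pos_iff.mpr hne
    have hget : ∀ s (hs : s < π.length), π.get ⟨s, hs⟩ = v + (s : ZMod mm) := by
      intro s
      induction s with
      | zero =>
        intro hs
        cases π with
        | nil => simp at hlen
        | cons a l =>
          simp only [List.head?_cons, Option.some.injEq] at hhead
          simpa using hhead
      | succ s ih =>
        intro hs
        have h1 : s < π.length := by omega
        have hc := List.isChain_iff_getElem.mp hchain s (by omega)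
        have : π.get ⟨s + 1, hs⟩ = π.get ⟨s, h1⟩ + 1 := hc
        rw [this, ih h1]
        push_cast
        ring
    have hlast' : π.get ⟨π.length - 1, by omega⟩ = w := by
      rw [List.getLast?_eq_getLast hne, Option.some_inj] at hlast
      rw [← hlast, List.getLast_eq_getElem, List.get_eq_getElem]
    have hD : Dv g v = π.length - 1 := by
      refine Dv_eq g ?_ ?_
      · rw [← hget _ (by omega), hlast']; exact hw
      · intro t ht
        have htl : t < π.dropLast.length := by
          rw [List.length_dropLast]; omega
        have : π.dropLast.get ⟨t, htl⟩ ∈ π.dropLast := List.get_mem _ _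
        have hgd : π.dropLast.get ⟨t, htl⟩ = v + (t : ZMod mm) := by
          rw [List.get_eq_getElem, List.getElem_dropLast, ← hget t (by omega)]
          rfl
        rw [← hgd]
        exact hdrop _ this
    refine List.ext_get ?_ ?_
    · simp [hD]; omega
    · intro s h1 h2
      rw [hget s h1]
      simp
  · rintro rfl
    have hsplit : List.map (fun t : ℕ => v + (t : ZMod mm)) (List.range (Dv g v + 1))
        = List.map (fun t : ℕ => v + (t : ZMod mm)) (List.range (Dv g v)) ++ [v + (Dv g v : ZMod mm)] := by
      rw [List.range_succ, List.map_append]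
      rfl
    show (List.map (fun t : ℕ => v + (t : ZMod mm)) (List.range (Dv g v + 1))) ≠ [] ∧ (List.map (fun t : ℕ => v + (t : ZMod mm)) (List.range (Dv g v + 1))).head? = some v ∧
      List.Chain' (fun a b : ZMod mm => b = a + 1) (List.map (fun t : ℕ => v + (t : ZMod mm)) (List.range (Dv g v + 1))) ∧
      (∀ u ∈ (List.map (fun t : ℕ => v + (t : ZMod mm)) (List.range (Dv g v + 1))).dropLast, u ∉ Set.range g) ∧ ∃ w ∈ Set.range g, (List.map (fun t : ℕ => v + (t : ZMod mm)) (List.range (Dv g v + 1))).getLast? = some w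
    refine ⟨by simp, ?_, ?_, ?_, ?_⟩
    · rw [List.range_succ_eq_map]
      simp
    · refine List.isChain_iff_getElem.mpr ?_
      intro s hs
      simp only [List.get_eq_getElem, List.getElem_map, List.getElem_range]
      show v + ((s + 1 : ℕ) : ZMod mm) = v + (s : ZMod mm) + 1
      push_cast
      ring
    · rw [hsplit, List.dropLast_concat]
      intro u hu
      simp only [List.mem_map, List.mem_range] at hu
      obtain ⟨t, ht, rfl⟩ := hu
      exact Dv_min g ht
    · refine ⟨v + (Dv g v : ZMod mm), Dv_spec g hk v, ?_⟩
      rw [hsplit, List.getLast?_concat]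

end URing

end Stmt7Aux
namespace Stmt7Aux

section MuEq

variable {k mm : ℕ} (hm2 : 2 ≤ mm) (g : Fin k → ZMod mm) (hk : 1 ≤ k)

lemma mu_uniRing (hg : Function.Injective g) : ∀ (d : ℕ) (v : ZMod mm),
    mu (uniRing mm hm2) g d v = Mfun k d (tau g hk v) := by
  haveI : NeZero mm := ⟨by omega⟩
  intro d
  induction d with
  | zero =>
    intro v
    show lab (uniRing mm hm2) g v = Mfun k 0 (tau g hk v)
    rw [tau]
    by_cases h : Dv g v = 0
    · rw [if_pos h]
      have hv : v ∈ Set.range g := (Dv_eq_zero_iff g hk).mp h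
      show lab (uniRing mm hm2) g v = ({idxF g hk v} : Finset (Fin k))
      ext j
      simp only [lab, Finset.mem_filter, Finset.mem_univ, true_and, Finset.mem_singleton]
      constructor
      · intro hj
        exact hg (by rw [hj, g_idxF g hk hv])
      · rintro rfl
        exact g_idxF g hk hv
    · rw [if_neg h]
      have hv : v ∉ Set.range g := fun hv => h ((Dv_eq_zero_iff g hk).mpr hv)
      show lab (uniRing mm hm2) g v = (∅ : Finset (Fin k))
      ext j
      simp only [lab, Finset.mem_filter, Finset.mem_univ, true_and, Finset.notMem_empty,
        iff_false]
      exact fun hj => hv ⟨j, hj⟩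
  | succ d ih =>
    intro v
    set D := Dv g v with hDdef
    set jw := idxF g hk (v + (D : ZMod mm)) with hjw
    have ha : ∀ t : ℕ, t < D →
        mu (uniRing mm hm2) g d (v + (t : ZMod mm)) = Mfun k d (Sum.inr jw) := by
      intro t ht
      rw [ih]
      congr 1
      have hD' : Dv g (v + (t : ZMod mm)) = D - t := Dv_add g hk (le_of_lt ht)
      rw [tau, if_neg (by omega), hD']
      congr 1
      rw [hjw]
      congr 1
      rw [add_assoc, ← Nat.cast_add, Nat.add_sub_cancel' (le_of_lt ht)]
    have hb : mu (uniRing mm hm2) g d (v + (D : ZMod mm)) = Mfun k d (Sum.inl jw) := by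
      rw [ih]
      congr 1
      have hD' : Dv g (v + (D : ZMod mm)) = 0 := by
        rw [Dv_add g hk (le_refl D)]; omega
      rw [tau, if_pos hD']
    have hmap : List.map (mu (uniRing mm hm2) g d)
        (List.map (fun t : ℕ => v + (t : ZMod mm)) (List.range (D + 1)))
        = List.replicate D (Mfun k d (Sum.inr jw)) ++ [Mfun k d (Sum.inl jw)] := by
      erw [List.map_map, List.range_succ, List.map_append]
      congr 1
      · refine List.eq_replicate_iff.mpr ⟨by simp, ?_⟩
        intro x hx
        simp only [List.mem_map, List.mem_range, Function.comp] at hx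
        obtain ⟨t, ht, rfl⟩ := hx
        exact ha t ht
      · simp only [List.map_cons, List.map_nil, Function.comp]
        rw [hb]
    have hdst : dst (List.replicate D (Mfun k d (Sum.inr jw)) ++ [Mfun k d (Sum.inl jw)])
        = if D = 0 then [Mfun k d (Sum.inl jw)]
          else [Mfun k d (Sum.inr jw), Mfun k d (Sum.inl jw)] :=
      dst_rep_concat _ _ (Ne.symm (Mfun_inl_ne_inr k d jw jw)) D
    have hset : mu (uniRing mm hm2) g (d+1) v
        = {s : List (Mark k d) | s = dst (List.replicate D (Mfun k d (Sum.inr jw))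
            ++ [Mfun k d (Sum.inl jw)])} := by
      show {s : List (Mark k d) | ∃ π, InX (uniRing mm hm2) g v π
          ∧ s = dst (π.map (mu (uniRing mm hm2) g d))} = _
      ext s
      simp only [Set.mem_setOf_eq]
      constructor
      · rintro ⟨π, hπ, rfl⟩
        erw [(InX_uniRing hm2 g hk v π).mp hπ, hmap]
      · rintro rfl
        refine ⟨_, (InX_uniRing hm2 g hk v _).mpr rfl, ?_⟩
        erw [hmap]
    rw [hset, hdst, tau]
    by_cases h : D = 0
    · rw [if_pos h, if_pos h]
      have hv : v + ((D : ℕ) : ZMod mm) = v := by rw [h]; simp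
      show {s : List (Mark k d) | s = [Mfun k d (Sum.inl jw)]}
        = ({[Mfun k d (Sum.inl (idxF g hk v))]} : Set (List (Mark k d)))
      rw [Set.setOf_eq_eq_singleton]
      rw [hjw, hv]
    · rw [if_neg h, if_neg h]
      show {s : List (Mark k d) | s = [Mfun k d (Sum.inr jw), Mfun k d (Sum.inl jw)]}
        = ({[Mfun k d (Sum.inr jw), Mfun k d (Sum.inl jw)]} : Set (List (Mark k d)))
      rw [Set.setOf_eq_eq_singleton]

end MuEq

end Stmt7Aux
namespace Stmt7Aux

section Char

variable {k mm : ℕ} [NeZero mm] (g : Fin k → ZMod mm) (hk : 1 ≤ k)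

lemma exists_prev (hk : 1 ≤ k) {v : ZMod mm} (hv : Dv g v ≠ 0) :
    ∃ i, big g i ∧ g i + 1 + (Dv g (g i + 1) : ZMod mm) = v + (Dv g v : ZMod mm) := by
  have hSne : {t : ℕ | v - ((t + 1 : ℕ) : ZMod mm) ∈ Set.range g}.Nonempty := by
    refine ⟨(v - g ⟨0, hk⟩).val + mm - 1, ⟨⟨0, hk⟩, ?_⟩⟩
    have h1 : 1 ≤ mm := Nat.one_le_iff_ne_zero.mpr (NeZero.ne mm)
    have : ((v - g ⟨0, hk⟩).val + mm - 1 + 1 : ℕ) = (v - g ⟨0, hk⟩).val + mm := by omega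
    rw [this]
    push_cast
    rw [ZMod.natCast_self, ZMod.natCast_val, ZMod.cast_id]
    ring
  set P := sInf {t : ℕ | v - ((t + 1 : ℕ) : ZMod mm) ∈ Set.range g} with hP
  have hu : v - ((P + 1 : ℕ) : ZMod mm) ∈ Set.range g := Nat.sInf_mem hSne
  have hmin : ∀ s, s < P → v - ((s + 1 : ℕ) : ZMod mm) ∉ Set.range g :=
    fun s hs => Nat.notMem_of_lt_sInf hs
  set u := v - ((P + 1 : ℕ) : ZMod mm) with hu'
  set i := idxF g hk u with hi
  have hgi : g i = u := g_idxF g hk hu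
  have hu1 : u + 1 = v - (P : ZMod mm) := by rw [hu']; push_cast; ring
  have hDu1 : Dv g (u + 1) = P + Dv g v := by
    refine Dv_eq g ?_ ?_
    · have : u + 1 + ((P + Dv g v : ℕ) : ZMod mm) = v + (Dv g v : ZMod mm) := by
        rw [hu1]; push_cast; ring
      rw [this]
      exact Dv_spec g hk v
    · intro t ht
      rcases lt_trichotomy t P with h | h | h
      · have hc : u + 1 + (t : ZMod mm) = v - (((P - t - 1) + 1 : ℕ) : ZMod mm) := by
          rw [hu1]
          have : ((P - t - 1) + 1 : ℕ) = P - t := by omega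
          rw [this, Nat.cast_sub (le_of_lt h)]
          ring
        rw [hc]
        exact hmin _ (by omega)
      · have hc : u + 1 + (t : ZMod mm) = v := by rw [hu1, h]; ring
        rw [hc]
        exact fun hmem => hv ((Dv_eq_zero_iff g hk).mpr hmem)
      · have hc : u + 1 + (t : ZMod mm) = v + ((t - P : ℕ) : ZMod mm) := by
          rw [hu1, Nat.cast_sub (le_of_lt h)]
          ring
        rw [hc]
        exact Dv_min g (by omega)
  refine ⟨i, ?_, ?_⟩
  · rw [big, hgi, hDu1]
    omega
  · rw [hgi, hDu1, hu1]
    push_cast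
    ring

lemma range_tau (hg : Function.Injective g) :
    Set.range (tau g hk) =
      {x | (∃ i, x = Sum.inl i) ∨ ∃ i, big g i ∧ x = Sum.inr (Ng g hk i)} := by
  ext x
  simp only [Set.mem_range, Set.mem_setOf_eq]
  constructor
  · rintro ⟨v, rfl⟩
    by_cases h : Dv g v = 0
    · exact Or.inl ⟨idxF g hk v, by rw [tau, if_pos h]⟩
    · obtain ⟨i, hbig, heq⟩ := exists_prev g hk h
      refine Or.inr ⟨i, hbig, ?_⟩
      rw [tau, if_neg h, Ng, heq]
  · rintro (⟨i, rfl⟩ | ⟨i, hbig, rfl⟩)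
    · exact ⟨g i, tau_g g hk hg i⟩
    · exact ⟨g i + 1, tau_succ_g_big g hk hbig⟩

/-- Abstract characterization of marking-labeled edges. -/
def EdgeChar (N : Fin k → Fin k) (B : Fin k → Prop) (s t : Fin k ⊕ Fin k) : Prop :=
  ∃ i, (¬ B i ∧ s = Sum.inl i ∧ t = Sum.inl (N i)) ∨
    (B i ∧ s = Sum.inl i ∧ t = Sum.inr (N i)) ∨
    (B i ∧ s = Sum.inr (N i) ∧ t = Sum.inl (N i))

lemma edge_tau (hg : Function.Injective g) (s t : Fin k ⊕ Fin k) (hst : s ≠ t) :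
    (∃ u : ZMod mm, tau g hk u = s ∧ tau g hk (u + 1) = t) ↔
      EdgeChar (Ng g hk) (big g) s t := by
  constructor
  · rintro ⟨u, rfl, rfl⟩
    by_cases hD : Dv g u = 0
    · have hu : u ∈ Set.range g := (Dv_eq_zero_iff g hk).mp hD
      have hgi : g (idxF g hk u) = u := g_idxF g hk hu
      set i := idxF g hk u
      refine ⟨i, ?_⟩
      by_cases hb : big g i
      · refine Or.inr (Or.inl ⟨hb, ?_, ?_⟩)
        · rw [tau, if_pos hD]
        · rw [← hgi, tau_succ_g_big g hk hb]
      · refine Or.inl ⟨hb, ?_, ?_⟩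
        · rw [tau, if_pos hD]
        · rw [← hgi, tau_succ_g_small g hk hb]
    · by_cases hD1 : Dv g u = 1
      · obtain ⟨i, hbig, heq⟩ := exists_prev g hk hD
        refine ⟨i, Or.inr (Or.inr ⟨hbig, ?_, ?_⟩)⟩
        · rw [tau, if_neg hD, Ng, heq]
        · have h0 : Dv g (u + 1) = 0 := by
            have := Dv_add g hk (v := u) (t := 1) (by omega)
            simpa [hD1] using this
          rw [tau, if_pos h0]
          congr 1
          have : u + (Dv g u : ZMod mm) = u + 1 := by rw [hD1]; push_cast; ring
          rw [Ng, heq, this]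
      · exfalso
        apply hst
        have h1 : (1 : ℕ) ≤ Dv g u := by omega
        have hD' : Dv g (u + 1) = Dv g u - 1 := by
          have := Dv_add g hk (t := 1) h1
          simpa using this
        rw [tau, if_neg hD, tau, if_neg (by omega)]
        congr 2
        rw [hD']
        rw [add_assoc, ← Nat.cast_one (R := ZMod mm), ← Nat.cast_add,
          Nat.add_sub_cancel' h1]
  · rintro ⟨i, (⟨hb, rfl, rfl⟩ | ⟨hb, rfl, rfl⟩ | ⟨hb, rfl, rfl⟩)⟩
    · exact ⟨g i, tau_g g hk hg i, tau_succ_g_small g hk hb⟩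
    · exact ⟨g i, tau_g g hk hg i, tau_succ_g_big g hk hb⟩
    · have hD' : 1 ≤ Dv g (g i + 1) := by
        rw [big] at hb; omega
      set u := g i + 1 + ((Dv g (g i + 1) - 1 : ℕ) : ZMod mm) with hu
      have hcast : ((Dv g (g i + 1) - 1 : ℕ) : ZMod mm) + 1
          = (Dv g (g i + 1) : ZMod mm) := by
        rw [Nat.cast_sub hD']
        simp
      have hu1 : u + 1 = g (Ng g hk i) := by
        rw [hu, g_Ng g hk i, add_assoc, hcast]
      have hDu : Dv g u = 1 := by
        rw [hu, Dv_add g hk (by omega)]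
        omega
      refine ⟨u, ?_, ?_⟩
      · rw [tau, if_neg (by omega)]
        congr 1
        have : u + (Dv g u : ZMod mm) = u + 1 := by rw [hDu]; push_cast; ring
        rw [this, hu1, idxF_g g hk hg]
      · rw [hu1, tau_g g hk hg]

end Char

end Stmt7Aux
namespace Stmt7Aux

section Pos

variable {k mm : ℕ} [NeZero mm] (g : Fin k → ZMod mm) (hk : 1 ≤ k) (j₀ : Fin k)

lemma exists_gap (hk : 1 ≤ k) (hm : 2 * k ≤ mm) : ∃ j₀ : Fin k, g j₀ - 1 ∉ Set.range g := by
  by_contra hcon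
  push_neg at hcon
  have hstep : ∀ t : ℕ, g ⟨0, hk⟩ - (t : ZMod mm) ∈ Set.range g := by
    intro t
    induction t with
    | zero => exact ⟨⟨0, hk⟩, by simp⟩
    | succ t ih =>
      obtain ⟨j, hj⟩ := ih
      have := hcon j
      rw [hj] at this
      have heq : g ⟨0, hk⟩ - (t : ZMod mm) - 1 = g ⟨0, hk⟩ - ((t + 1 : ℕ) : ZMod mm) := by
        push_cast
        ring
      rwa [heq] at this
  have hsurj : Function.Surjective g := by
    intro v
    have := hstep (g ⟨0, hk⟩ - v).val
    rwa [ZMod.natCast_val, ZMod.cast_id, sub_sub_cancel] at this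
  have hcard := Fintype.card_le_of_surjective g hsurj
  simp [ZMod.card] at hcard
  omega

/-- Position of `g i` relative to the base marked vertex `g j₀`. -/
def pos (i : Fin k) : ℕ := (g i - g j₀).val

lemma pos_lt (i : Fin k) : pos g j₀ i < mm := ZMod.val_lt _

lemma pos_j₀ : pos g j₀ j₀ = 0 := by simp [pos]

lemma g_eq_pos (i : Fin k) : g i = g j₀ + (pos g j₀ i : ZMod mm) := by
  rw [pos, ZMod.natCast_val, ZMod.cast_id]
  ring

lemma pos_inj (hg : Function.Injective g) {i i' : Fin k}
    (h : pos g j₀ i = pos g j₀ i') : i = i' := by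
  apply hg
  rw [g_eq_pos g j₀ i, g_eq_pos g j₀ i', h]

/-- `mp q`: `q` is a marked position. -/
def mp (q : ℕ) : Prop := ∃ i, pos g j₀ i = q

lemma marked_iff_mp {t : ℕ} (ht : t < mm) :
    g j₀ + (t : ZMod mm) ∈ Set.range g ↔ mp g j₀ t := by
  constructor
  · rintro ⟨i, hi⟩
    refine ⟨i, ?_⟩
    rw [pos, hi, add_sub_cancel_left, ZMod.val_natCast, Nat.mod_eq_of_lt ht]
  · rintro ⟨i, rfl⟩
    exact ⟨i, g_eq_pos g j₀ i⟩

/-- The length of the gap from `g i` to the next marked vertex. -/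
noncomputable def gap (i : Fin k) : ℕ := Dv g (g i + 1) + 1

lemma one_le_gap (i : Fin k) : 1 ≤ gap g i := by rw [gap]; omega

lemma big_iff_gap (i : Fin k) : big g i ↔ 2 ≤ gap g i := by
  rw [big, gap]
  omega

lemma g_add_gap (i : Fin k) : g i + (gap g i : ZMod mm) = g (Ng g hk i) := by
  rw [g_Ng g hk i, gap]
  push_cast
  ring

lemma gap_unmarked {i : Fin k} {t : ℕ} (h1 : 1 ≤ t) (h2 : t < gap g i) :
    g i + (t : ZMod mm) ∉ Set.range g := by
  have hc : (t : ZMod mm) = ((t - 1 : ℕ) : ZMod mm) + 1 := by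
    rw [← Nat.cast_one (R := ZMod mm), ← Nat.cast_add]
    congr 1
    omega
  have : g i + (t : ZMod mm) = g i + 1 + ((t - 1 : ℕ) : ZMod mm) := by
    rw [hc]; ring
  rw [this]
  refine Dv_min g ?_
  rw [gap] at h2
  omega

lemma pos_add_gap_le (i : Fin k) : pos g j₀ i + gap g i ≤ mm := by
  by_contra hcon
  push_neg at hcon
  have h1 : 1 ≤ mm - pos g j₀ i := by have := pos_lt g j₀ i; omega
  have h2 : mm - pos g j₀ i < gap g i := by omega
  refine gap_unmarked g h1 h2 ?_
  have : g i + ((mm - pos g j₀ i : ℕ) : ZMod mm) = g j₀ := by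
    rw [g_eq_pos g j₀ i, add_assoc, ← Nat.cast_add]
    have : pos g j₀ i + (mm - pos g j₀ i) = mm := by have := pos_lt g j₀ i; omega
    rw [this, ZMod.natCast_self, add_zero]
  rw [this]
  exact ⟨j₀, rfl⟩

lemma pos_Ng_of_lt {i : Fin k} (h : pos g j₀ i + gap g i < mm) :
    pos g j₀ (Ng g hk i) = pos g j₀ i + gap g i := by
  rw [pos, ← g_add_gap g hk i, g_eq_pos g j₀ i, add_assoc, ← Nat.cast_add,
    add_sub_cancel_left, ZMod.val_natCast, Nat.mod_eq_of_lt h]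

lemma Ng_of_eq {i : Fin k} (hg : Function.Injective g)
    (h : pos g j₀ i + gap g i = mm) : Ng g hk i = j₀ := by
  apply hg
  rw [← g_add_gap g hk i, g_eq_pos g j₀ i, add_assoc, ← Nat.cast_add, h,
    ZMod.natCast_self, add_zero]

lemma not_mp_in_gap {i : Fin k} {q : ℕ} (hq1 : pos g j₀ i < q)
    (hq2 : q < pos g j₀ i + gap g i) : ¬ mp g j₀ q := by
  rintro ⟨i', hi'⟩
  have hqm : q < mm := lt_of_lt_of_le hq2 (pos_add_gap_le g j₀ i)
  have hmem : g j₀ + (q : ZMod mm) ∈ Set.range g := by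
    rw [← hi']
    exact ⟨i', g_eq_pos g j₀ i'⟩
  have heq : g j₀ + (q : ZMod mm) = g i + ((q - pos g j₀ i : ℕ) : ZMod mm) := by
    rw [g_eq_pos g j₀ i, add_assoc, ← Nat.cast_add]
    congr 2
    omega
  rw [heq] at hmem
  exact gap_unmarked g (by omega) (by omega) hmem

lemma pos_succ_ge {i i' : Fin k} (h : pos g j₀ i < pos g j₀ i') :
    pos g j₀ i + gap g i ≤ pos g j₀ i' := by
  by_contra hcon
  push_neg at hcon
  exact not_mp_in_gap g j₀ h hcon ⟨i', rfl⟩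

end Pos

end Stmt7Aux
namespace Stmt7Aux

section Psi

variable {k mm : ℕ} [NeZero mm] (g : Fin k → ZMod mm) (hk : 1 ≤ k) (j₀ : Fin k)

/-- Positions kept by the compression: marked positions and their predecessors. -/
def keep (q : ℕ) : Prop := mp g j₀ q ∨ mp g j₀ (q + 1)

/-- The compression map: counts kept positions below `p`. -/
noncomputable def psi (p : ℕ) : ℕ :=
  (@Finset.filter _ (keep g j₀) (Classical.decPred _) (Finset.range p)).card

lemma psi_zero : psi g j₀ 0 = 0 := by
  simp [psi]

lemma psi_mono {p p' : ℕ} (h : p ≤ p') : psi g j₀ p ≤ psi g j₀ p' := by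
  classical
  refine Finset.card_le_card (Finset.filter_subset_filter _ ?_)
  exact Finset.range_subset_range.mpr h

lemma psi_succ_keep {p : ℕ} (h : keep g j₀ p) : psi g j₀ (p + 1) = psi g j₀ p + 1 := by
  classical
  rw [psi, psi, Finset.range_add_one, Finset.filter_insert]
  rw [if_pos h, Finset.card_insert_of_notMem (by simp)]

lemma psi_succ_nokeep {p : ℕ} (h : ¬ keep g j₀ p) : psi g j₀ (p + 1) = psi g j₀ p := by
  classical
  rw [psi, psi, Finset.range_add_one, Finset.filter_insert, if_neg h]

lemma psi_const {p p' : ℕ} (h : p ≤ p')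
    (hall : ∀ q, p ≤ q → q < p' → ¬ keep g j₀ q) : psi g j₀ p' = psi g j₀ p := by
  induction p', h using Nat.le_induction with
  | base => rfl
  | succ p' hle ih =>
    rw [psi_succ_nokeep g j₀ (hall p' hle (by omega)), ih]
    intro q hq1 hq2
    exact hall q hq1 (by omega)

lemma psi_strict {p p' : ℕ} (hp : keep g j₀ p) (h : p < p') :
    psi g j₀ p + 1 ≤ psi g j₀ p' := by
  calc psi g j₀ p + 1 = psi g j₀ (p + 1) := (psi_succ_keep g j₀ hp).symm
    _ ≤ psi g j₀ p' := psi_mono g j₀ h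

lemma psi_le_bound (hk : 1 ≤ k) (hg : Function.Injective g) {p : ℕ} :
    psi g j₀ p ≤ 2 * k - 1 := by
  classical
  have hsub : (Finset.range p).filter (keep g j₀) ⊆
      (Finset.univ.image (pos g j₀)) ∪
        ((Finset.univ.erase j₀).image (fun i => pos g j₀ i - 1)) := by
    intro q hq
    rw [Finset.mem_filter] at hq
    rcases hq.2 with ⟨i, hi⟩ | ⟨i, hi⟩
    · exact Finset.mem_union_left _ (Finset.mem_image.mpr ⟨i, Finset.mem_univ i, hi⟩)
    · refine Finset.mem_union_right _ (Finset.mem_image.mpr ⟨i, ?_, by omega⟩)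
      refine Finset.mem_erase.mpr ⟨?_, Finset.mem_univ i⟩
      rintro rfl
      rw [pos_j₀] at hi
      omega
  have h1 := Finset.card_le_card hsub
  have h2 := Finset.card_union_le (Finset.univ.image (pos g j₀))
    ((Finset.univ.erase j₀).image (fun i => pos g j₀ i - 1))
  have h3 := Finset.card_image_le (s := (Finset.univ : Finset (Fin k))) (f := pos g j₀)
  have h4 := Finset.card_image_le (s := Finset.univ.erase j₀) (f := fun i => pos g j₀ i - 1)
  have h5 : (Finset.univ.erase j₀).card = k - 1 := by
    rw [Finset.card_erase_of_mem (Finset.mem_univ j₀)]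
    simp
  rw [h5] at h4
  have h6 : (Finset.univ : Finset (Fin k)).card = k := by simp
  rw [h6] at h3
  rw [psi]
  omega

end Psi

end Stmt7Aux
namespace Stmt7Aux

section Construct

variable {k m n : ℕ}

lemma construct [NeZero m] [NeZero n] (hk : 1 ≤ k) (hm : 2 * k ≤ m) (hn : 2 * k ≤ n)
    (g : Fin k → ZMod m) (hg : Function.Injective g) :
    ∃ h : Fin k → ZMod n, Function.Injective h ∧
      (∀ i, Ng h hk i = Ng g hk i) ∧ (∀ i, big h i ↔ big g i) := by
  obtain ⟨j₀, hj₀⟩ := exists_gap g hk hm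
  set np : Fin k → ℕ := fun i => psi g j₀ (pos g j₀ i) with hnp
  have hkeep : ∀ i, keep g j₀ (pos g j₀ i) := fun i => Or.inl ⟨i, rfl⟩
  have hnpb : ∀ i, np i ≤ 2 * k - 2 := by
    intro i
    have h2 := psi_strict g j₀ (hkeep i) (pos_lt g j₀ i)
    have h3 := psi_le_bound g j₀ hk hg (p := m)
    simp only [hnp]
    omega
  set h : Fin k → ZMod n := fun i => (np i : ZMod n) with hh
  have hval : ∀ i, (h i).val = np i := by
    intro i
    rw [hh]
    exact ZMod.val_natCast_of_lt (by have := hnpb i; omega)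
  have hmono : ∀ {i i' : Fin k}, pos g j₀ i < pos g j₀ i' → np i + 1 ≤ np i' :=
    fun {i i'} hlt => psi_strict g j₀ (hkeep i) hlt
  have hmono' : ∀ {i i' : Fin k}, pos g j₀ i ≤ pos g j₀ i' → np i ≤ np i' :=
    fun {i i'} hle => psi_mono g j₀ hle
  have hinj : Function.Injective h := by
    intro i i' hii
    have hnn : np i = np i' := by rw [← hval i, ← hval i', hii]
    refine pos_inj g j₀ hg ?_
    rcases lt_trichotomy (pos g j₀ i) (pos g j₀ i') with hc | hc | hc
    · have := hmono hc; omega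
    · exact hc
    · have := hmono hc; omega
  have hnpj₀ : np j₀ = 0 := by rw [hnp]; simp only [pos_j₀]; exact psi_zero g j₀
  have key : ∀ i, Ng h hk i = Ng g hk i ∧ (big h i ↔ big g i) := by
    intro i
    have hG1 := one_le_gap g i
    rcases eq_or_lt_of_le (pos_add_gap_le g j₀ i) with hPG | hPG
    · -- wrap-around case
      have hNgg : Ng g hk i = j₀ := Ng_of_eq g hk j₀ hg hPG
      have hbigg : big g i := by
        rw [big_iff_gap]
        by_contra hcon
        have hgap1 : gap g i = 1 := by omega
        have hpos : pos g j₀ i = m - 1 := by omega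
        refine hj₀ ⟨i, ?_⟩
        rw [g_eq_pos g j₀ i, hpos, Nat.cast_sub (by have := NeZero.pos m; omega),
          ZMod.natCast_self, Nat.cast_one]
        ring
      have hmax : ∀ i', pos g j₀ i' ≤ pos g j₀ i := by
        intro i'
        by_contra hcon
        push_neg at hcon
        have := pos_succ_ge g j₀ hcon
        have := pos_lt g j₀ i'
        omega
      have hnpmax : ∀ i', np i' ≤ np i := fun i' => hmono' (hmax i')
      set D : ℕ := n - np i - 1 with hD
      have hD1 : 1 ≤ D := by have := hnpb i; omega
      have hsum : np i + 1 + D = n := by have := hnpb i; omega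
      have hmem : h i + 1 + (D : ZMod n) ∈ Set.range h := by
        have heq : h i + 1 + (D : ZMod n) = ((np i + 1 + D : ℕ) : ZMod n) := by
          rw [hh]
          push_cast
          ring
        rw [heq, hsum, ZMod.natCast_self]
        exact ⟨j₀, by rw [hh]; simp [hnpj₀]⟩
      have hmin : ∀ t, t < D → h i + 1 + (t : ZMod n) ∉ Set.range h := by
        intro t ht
        have heq : h i + 1 + (t : ZMod n) = ((np i + 1 + t : ℕ) : ZMod n) := by
          rw [hh]
          push_cast
          ring
        rw [heq]
        rintro ⟨i'', hi''⟩
        have hv : np i'' = np i + 1 + t := by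
          rw [← hval i'', hi'', ZMod.val_natCast_of_lt (by omega)]
        have := hnpmax i''
        omega
      have hDvh : Dv h (h i + 1) = D := Dv_eq h hmem hmin
      constructor
      · rw [Ng, hDvh, hNgg]
        have heq : h i + 1 + (D : ZMod n) = h j₀ := by
          have h2 : h i + 1 + (D : ZMod n) = ((np i + 1 + D : ℕ) : ZMod n) := by
            rw [hh]; push_cast; ring
          rw [h2, hsum, ZMod.natCast_self, hh]
          simp [hnpj₀]
        rw [heq, idxF_g h hk hinj]
      · rw [big, hDvh]
        constructor
        · intro _; exact hbigg
        · intro _; omega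
    · -- non-wrap case
      have hposNg : pos g j₀ (Ng g hk i) = pos g j₀ i + gap g i :=
        pos_Ng_of_lt g hk j₀ hPG
      rcases eq_or_lt_of_le hG1 with hG | hG
      · -- gap = 1
        have hgap1 : gap g i = 1 := hG.symm
        have hnpNg : np (Ng g hk i) = np i + 1 := by
          rw [hnp]
          simp only [hposNg, hgap1]
          exact psi_succ_keep g j₀ (hkeep i)
        have hstep : h (Ng g hk i) = h i + 1 := by
          rw [hh]
          simp only [hnpNg]
          push_cast
          ring
        have hDvh : Dv h (h i + 1) = 0 := by
          rw [Dv_eq_zero_iff h hk]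
          exact ⟨Ng g hk i, hstep⟩
        have hbigg : ¬ big g i := by rw [big_iff_gap]; omega
        constructor
        · rw [Ng, hDvh, Nat.cast_zero, add_zero, ← hstep, idxF_g h hk hinj]
        · rw [big, hDvh]
          simp only [ne_eq, not_true_eq_false, false_iff]
          exact hbigg
      · -- gap ≥ 2
        have hG2 : 2 ≤ gap g i := hG
        have hnpNg : np (Ng g hk i) = np i + 2 := by
          rw [hnp]
          simp only [hposNg]
          have k1 : keep g j₀ (pos g j₀ i + gap g i - 1) := by
            refine Or.inr ⟨Ng g hk i, ?_⟩
            rw [hposNg]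
            omega
          have e1 : psi g j₀ (pos g j₀ i + gap g i)
              = psi g j₀ (pos g j₀ i + gap g i - 1) + 1 := by
            have e0 : psi g j₀ (pos g j₀ i + gap g i)
                = psi g j₀ ((pos g j₀ i + gap g i - 1) + 1) := by
              rw [Nat.sub_add_cancel (by omega : 1 ≤ pos g j₀ i + gap g i)]
            rw [e0, psi_succ_keep g j₀ k1]
          have e2 : psi g j₀ (pos g j₀ i + gap g i - 1) = psi g j₀ (pos g j₀ i + 1) := by
            refine psi_const g j₀ (by omega) ?_
            intro q hq1 hq2 hq3
            rcases hq3 with hq4 | hq4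
            · exact not_mp_in_gap g j₀ (i := i) (by omega) (by omega) hq4
            · exact not_mp_in_gap g j₀ (i := i) (q := q + 1) (by omega) (by omega) hq4
          have e3 : psi g j₀ (pos g j₀ i + 1) = psi g j₀ (pos g j₀ i) + 1 :=
            psi_succ_keep g j₀ (hkeep i)
          omega
        have hstep2 : h i + 1 + ((1 : ℕ) : ZMod n) = h (Ng g hk i) := by
          rw [hh]
          simp only [hnpNg]
          push_cast
          ring
        have hmem : h i + 1 + ((1 : ℕ) : ZMod n) ∈ Set.range h :=
          ⟨Ng g hk i, hstep2.symm⟩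
        have hmin : ∀ t : ℕ, t < 1 → h i + 1 + (t : ZMod n) ∉ Set.range h := by
          intro t ht
          have ht0 : t = 0 := by omega
          subst ht0
          have heq : h i + 1 + ((0 : ℕ) : ZMod n) = ((np i + 1 : ℕ) : ZMod n) := by
            rw [hh]
            push_cast
            ring
          rw [heq]
          rintro ⟨i'', hi''⟩
          have hv : np i'' = np i + 1 := by
            rw [← hval i'', hi'', ZMod.val_natCast_of_lt (by have := hnpb i; omega)]
          rcases lt_trichotomy (pos g j₀ i'') (pos g j₀ i) with hc | hc | hc
          · have := hmono hc; omega
          · have : i'' = i := pos_inj g j₀ hg hc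
            subst this
            omega
          · have h1 := pos_succ_ge g j₀ hc
            have h2 : np (Ng g hk i) ≤ np i'' := by
              refine hmono' ?_
              rw [hposNg]
              exact h1
            omega
        have hDvh : Dv h (h i + 1) = 1 := Dv_eq h hmem hmin
        have hbigg : big g i := by rw [big_iff_gap]; omega
        constructor
        · rw [Ng, hDvh, hstep2, idxF_g h hk hinj]
        · rw [big, hDvh]
          simp only [ne_eq, one_ne_zero, not_false_eq_true, true_iff]
          exact hbigg
  exact ⟨h, hinj, fun i => (key i).1, fun i => (key i).2⟩

end Construct

end Stmt7Aux
open Stmt7Aux in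
private lemma stmt7_final {k m n : ℕ} (hk : 1 ≤ k) (hm : 2 * k ≤ m) (hn : 2 * k ≤ n)
    (hm2 : 2 ≤ m) (hn2 : 2 ≤ n)
    (g : Fin k → ZMod m) (hg : Function.Injective g) :
    ∃ h : Fin k → ZMod n, Function.Injective h ∧
      ∀ d : ℕ,
        (Set.range (mu (uniRing m hm2) g d) = Set.range (mu (uniRing n hn2) h d)) ∧
        (∀ a b : Mark k d,
          a ∈ Set.range (mu (uniRing m hm2) g d) →
          b ∈ Set.range (mu (uniRing m hm2) g d) → a ≠ b →
          ((∃ u v : ZMod m, (uniRing m hm2).E u v ∧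
              mu (uniRing m hm2) g d u = a ∧ mu (uniRing m hm2) g d v = b) ↔
           (∃ u v : ZMod n, (uniRing n hn2).E u v ∧
              mu (uniRing n hn2) h d u = a ∧ mu (uniRing n hn2) h d v = b))) := by
  haveI : NeZero m := ⟨by omega⟩
  haveI : NeZero n := ⟨by omega⟩
  obtain ⟨h, hinj, hNg, hbig⟩ := construct (n := n) hk hm hn g hg
  have hmug := mu_uniRing hm2 g hk hg
  have hmuh := mu_uniRing hn2 h hk hinj
  have hsets : Set.range (tau h hk) = Set.range (tau g hk) := by
    rw [range_tau g hk hg, range_tau h hk hinj]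
    ext x
    simp only [Set.mem_setOf_eq]
    constructor
    · rintro (hx | ⟨i, hb, rfl⟩)
      · exact Or.inl hx
      · exact Or.inr ⟨i, (hbig i).mp hb, by rw [hNg i]⟩
    · rintro (hx | ⟨i, hb, rfl⟩)
      · exact Or.inl hx
      · exact Or.inr ⟨i, (hbig i).mpr hb, by rw [hNg i]⟩
  have hEC : ∀ s t, EdgeChar (Ng h hk) (big h) s t ↔ EdgeChar (Ng g hk) (big g) s t := by
    intro s t
    constructor
    · rintro ⟨i, (⟨hb, hs, ht⟩ | ⟨hb, hs, ht⟩ | ⟨hb, hs, ht⟩)⟩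
      · rw [hNg i] at ht
        exact ⟨i, Or.inl ⟨fun hb' => hb ((hbig i).mpr hb'), hs, ht⟩⟩
      · rw [hNg i] at ht
        exact ⟨i, Or.inr (Or.inl ⟨(hbig i).mp hb, hs, ht⟩)⟩
      · rw [hNg i] at hs ht
        exact ⟨i, Or.inr (Or.inr ⟨(hbig i).mp hb, hs, ht⟩)⟩
    · rintro ⟨i, (⟨hb, hs, ht⟩ | ⟨hb, hs, ht⟩ | ⟨hb, hs, ht⟩)⟩
      · rw [← hNg i] at ht
        exact ⟨i, Or.inl ⟨fun hb' => hb ((hbig i).mp hb'), hs, ht⟩⟩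
      · rw [← hNg i] at ht
        exact ⟨i, Or.inr (Or.inl ⟨(hbig i).mpr hb, hs, ht⟩)⟩
      · rw [← hNg i] at hs ht
        exact ⟨i, Or.inr (Or.inr ⟨(hbig i).mpr hb, hs, ht⟩)⟩
  refine ⟨h, hinj, fun d => ⟨?_, ?_⟩⟩
  · have e1 : Set.range (mu (uniRing m hm2) g d) = Mfun k d '' Set.range (tau g hk) := by
      rw [funext (hmug d)]
      exact Set.range_comp (Mfun k d) (tau g hk)
    have e2 : Set.range (mu (uniRing n hn2) h d) = Mfun k d '' Set.range (tau h hk) := by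
      rw [funext (hmuh d)]
      exact Set.range_comp (Mfun k d) (tau h hk)
    rw [e1, e2, hsets]
  · intro a b ha hb hab
    have hiffg : (∃ u v : ZMod m, (uniRing m hm2).E u v ∧
        mu (uniRing m hm2) g d u = a ∧ mu (uniRing m hm2) g d v = b) ↔
        ∃ s t, EdgeChar (Ng g hk) (big g) s t ∧ Mfun k d s = a ∧ Mfun k d t = b := by
      constructor
      · rintro ⟨u, v, hE, hu, hv⟩
        have hv' : v = u + 1 := hE
        subst hv'
        rw [hmug d u] at hu
        rw [hmug d (u + 1)] at hv
        have hst : tau g hk u ≠ tau g hk (u + 1) :=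
          fun hst => hab (by rw [← hu, ← hv, hst])
        exact ⟨_, _, (edge_tau g hk hg _ _ hst).mp ⟨u, rfl, rfl⟩, hu, hv⟩
      · rintro ⟨s, t, hec, hs, ht⟩
        have hst : s ≠ t := fun hst => hab (by rw [← hs, ← ht, hst])
        obtain ⟨u, hu1, hu2⟩ := (edge_tau g hk hg s t hst).mpr hec
        exact ⟨u, u + 1, rfl, by rw [hmug d u, hu1]; exact hs,
          by rw [hmug d (u + 1), hu2]; exact ht⟩
    have hiffh : (∃ u v : ZMod n, (uniRing n hn2).E u v ∧
        mu (uniRing n hn2) h d u = a ∧ mu (uniRing n hn2) h d v = b) ↔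
        ∃ s t, EdgeChar (Ng h hk) (big h) s t ∧ Mfun k d s = a ∧ Mfun k d t = b := by
      constructor
      · rintro ⟨u, v, hE, hu, hv⟩
        have hv' : v = u + 1 := hE
        subst hv'
        rw [hmuh d u] at hu
        rw [hmuh d (u + 1)] at hv
        have hst : tau h hk u ≠ tau h hk (u + 1) :=
          fun hst => hab (by rw [← hu, ← hv, hst])
        exact ⟨_, _, (edge_tau h hk hinj _ _ hst).mp ⟨u, rfl, rfl⟩, hu, hv⟩
      · rintro ⟨s, t, hec, hs, ht⟩
        have hst : s ≠ t := fun hst => hab (by rw [← hs, ← ht, hst])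
        obtain ⟨u, hu1, hu2⟩ := (edge_tau h hk hinj s t hst).mpr hec
        exact ⟨u, u + 1, rfl, by rw [hmuh d u, hu1]; exact hs,
          by rw [hmuh d (u + 1), hu2]; exact ht⟩
    rw [hiffg, hiffh]
    refine exists_congr fun s => exists_congr fun t => ?_
    rw [hEC s t]

/-- combinatorial core of the cutoff `2k` for uni-rings: for rings
of sizes `m, n ≥ 2k` and any marked tuple `ḡ` in the ring of size `m` there is a
marked tuple `h̄` in the ring of size `n` with the same set of `d`-markings for
every `d`, and with matching marking-labeled edges. -/
theorem stmt7 {k m n : ℕ} (hk : 1 ≤ k) (hm : 2 * k ≤ m) (hn : 2 * k ≤ n)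
    (hm2 : 2 ≤ m) (hn2 : 2 ≤ n)
    (g : Fin k → ZMod m) (hg : Function.Injective g) :
    ∃ h : Fin k → ZMod n, Function.Injective h ∧
      ∀ d : ℕ,
        (Set.range (mu (uniRing m hm2) g d) = Set.range (mu (uniRing n hn2) h d)) ∧
        (∀ a b : Mark k d,
          a ∈ Set.range (mu (uniRing m hm2) g d) →
          b ∈ Set.range (mu (uniRing m hm2) g d) → a ≠ b →
          ((∃ u v : ZMod m, (uniRing m hm2).E u v ∧
              mu (uniRing m hm2) g d u = a ∧ mu (uniRing m hm2) g d v = b) ↔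
           (∃ u v : ZMod n, (uniRing n hn2).E u v ∧
              mu (uniRing n hn2) h d u = a ∧ mu (uniRing n hn2) h d v = b))) := by
  exact stmt7_final hk hm hn hm2 hn2 g hg
end
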